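/- Let ξ be a random variable with law ρ, where ρ is a probability measure supported in [−L,L]. For s ∈ ℝ define ψₙ(s) = E(ξ·e^{ξ²/(2n)+ξs})/E(e^{ξ²/(2n)+ξs}), ψ_∞(s) = E(ξe^{ξs})/E(e^{ξs}), φₙ(s) = E(ξ²·e^{ξ²/(2n)+ξs})/E(e^{ξ²/(2n)+ξs}), and φ_∞(s) = E(ξ²e^{ξs})/E(e^{ξs}). Let X = (X₁,…,Xₙ) follow the general Curie–Weiss model CW(ρ) at β=1, m = (X₁+⋯+Xₙ)/n and mᵢ = (1/n)Σ_{j≠i} Xⱼ. Then there is a constant C > 0 depending only on L such that for each 1 ≤ i ≤ n, almost surely |ψ_∞(m) − ψₙ(mᵢ)| ≤ C/n and |φ_∞(m) − φₙ(mᵢ)| ≤ C/n. -/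

import Mathlib

open MeasureTheory Real

/-- The Gibbs measure of the general Curie–Weiss model `CW(ρ)` at inverse
temperature `β = 1`. -/
noncomputable def cwMeasure (ρ : Measure ℝ) [IsProbabilityMeasure ρ] (n : ℕ) :
    Measure (Fin n → ℝ) :=
  (Measure.pi fun _ : Fin n => ρ).withDensity fun x =>
    ENNReal.ofReal (Real.exp ((∑ i, x i) ^ 2 / (2 * n)) /
      ∫ y : Fin n → ℝ, Real.exp ((∑ i, y i) ^ 2 / (2 * n))
        ∂(Measure.pi fun _ : Fin n => ρ))

/-- `ψₙ(s) = E(ξ e^{ξ²/(2n)+ξs}) / E(e^{ξ²/(2n)+ξs})`. -/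
noncomputable def psiN (ρ : Measure ℝ) (n : ℕ) (s : ℝ) : ℝ :=
  (∫ x, x * Real.exp (x ^ 2 / (2 * n) + x * s) ∂ρ) /
    (∫ x, Real.exp (x ^ 2 / (2 * n) + x * s) ∂ρ)

/-- `ψ_∞(s) = E(ξ e^{ξs}) / E(e^{ξs})`. -/
noncomputable def psiInf (ρ : Measure ℝ) (s : ℝ) : ℝ :=
  (∫ x, x * Real.exp (x * s) ∂ρ) / (∫ x, Real.exp (x * s) ∂ρ)

/-- `φₙ(s) = E(ξ² e^{ξ²/(2n)+ξs}) / E(e^{ξ²/(2n)+ξs})`. -/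
noncomputable def phiN (ρ : Measure ℝ) (n : ℕ) (s : ℝ) : ℝ :=
  (∫ x, x ^ 2 * Real.exp (x ^ 2 / (2 * n) + x * s) ∂ρ) /
    (∫ x, Real.exp (x ^ 2 / (2 * n) + x * s) ∂ρ)

/-- `φ_∞(s) = E(ξ² e^{ξs}) / E(e^{ξs})`. -/
noncomputable def phiInf (ρ : Measure ℝ) (s : ℝ) : ℝ :=
  (∫ x, x ^ 2 * Real.exp (x * s) ∂ρ) / (∫ x, Real.exp (x * s) ∂ρ)



lemma exp_sub_one_abs_le (w : ℝ) : |Real.exp w - 1| ≤ |w| * Real.exp |w| := by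
  rcases le_or_gt 0 w with h | h
  · rw [abs_of_nonneg h, abs_of_nonneg (sub_nonneg.2 (Real.one_le_exp h))]
    have h1 : -w + 1 ≤ Real.exp (-w) := Real.add_one_le_exp (-w)
    have h2 : Real.exp (-w) * Real.exp w = 1 := by rw [← Real.exp_add]; simp
    nlinarith [Real.exp_pos w]
  · rw [abs_of_neg h, abs_of_nonpos (sub_nonpos.2 (Real.exp_le_one_iff.2 h.le))]
    have h1 : w + 1 ≤ Real.exp w := Real.add_one_le_exp w
    have h2 : 1 ≤ Real.exp (-w) := Real.one_le_exp (by linarith)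
    nlinarith

lemma integrable_of_ae_bound {ρ : Measure ℝ} [IsProbabilityMeasure ρ] {f : ℝ → ℝ} {c : ℝ}
    (hf : AEStronglyMeasurable f ρ) (h : ∀ᵐ x ∂ρ, |f x| ≤ c) : Integrable f ρ :=
  (integrable_const c).mono' hf (by simpa using h)

lemma abs_integral_le_of_ae_bound {ρ : Measure ℝ} [IsProbabilityMeasure ρ] {f : ℝ → ℝ} {c : ℝ}
    (h : ∀ᵐ x ∂ρ, |f x| ≤ c) : |∫ x, f x ∂ρ| ≤ c := by
  have := norm_integral_le_of_norm_le (μ := ρ) (f := f) (integrable_const c)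
    (h.mono fun x hx => by simpa using hx)
  simpa using this

lemma le_integral_of_ae_bound {ρ : Measure ℝ} [IsProbabilityMeasure ρ] {f : ℝ → ℝ} {c : ℝ}
    (hf : Integrable f ρ) (h : ∀ᵐ x ∂ρ, c ≤ f x) : c ≤ ∫ x, f x ∂ρ := by
  have := integral_mono_ae (integrable_const c) hf h
  simpa using this

lemma div_sub_div_abs_le {A A' B B' b W D E nR : ℝ} (hb : 0 < b) (hn : 0 < nR)
    (hW : 0 ≤ W) (hD : 0 ≤ D) (hE : 0 ≤ E)
    (hB : b ≤ B) (hB' : b ≤ B') (hA' : |A'| ≤ W * E)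
    (hAA' : |A - A'| ≤ W * D / nR) (hBB' : |B - B'| ≤ D / nR) :
    |A / B - A' / B'| ≤ (W * D / b + W * E * D / b ^ 2) / nR := by
  have hBpos : 0 < B := hb.trans_le hB
  have hB'pos : 0 < B' := hb.trans_le hB'
  have key : A / B - A' / B' = (A - A') / B + A' * (B' - B) / (B * B') := by
    field_simp; ring
  rw [key]
  have h1 : |(A - A') / B| ≤ (W * D / nR) / b := by
    rw [abs_div, abs_of_pos hBpos]
    exact div_le_div₀ (by positivity) hAA' hb hB
  have h2 : |A' * (B' - B) / (B * B')| ≤ (W * E) * (D / nR) / (b * b) := by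
    rw [abs_div, abs_mul, abs_of_pos (mul_pos hBpos hB'pos)]
    refine div_le_div₀ (by positivity) ?_ (by positivity) ?_
    · exact mul_le_mul hA' (by rwa [abs_sub_comm]) (abs_nonneg _) (by positivity)
    · exact mul_le_mul hB hB' hb.le hBpos.le
  refine (abs_add_le _ _).trans ((add_le_add h1 h2).trans_eq ?_)
  field_simp

lemma ratio_bound (L : ℝ) (hL0 : 0 < L) (ρ : Measure ℝ) [IsProbabilityMeasure ρ]
    (hsupp : ∀ᵐ x ∂ρ, x ∈ Set.Icc (-L) L)
    (w : ℝ → ℝ) (hw : Measurable w) (W : ℝ) (hW1 : 1 ≤ W)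
    (hwb : ∀ x ∈ Set.Icc (-L) L, |w x| ≤ W)
    (n : ℕ) (hn : 1 ≤ n) (s t : ℝ) (hs : |s| ≤ L) (ht : |t| ≤ L)
    (hst : |s - t| ≤ L / n) :
    |(∫ x, w x * Real.exp (x * s) ∂ρ) / (∫ x, Real.exp (x * s) ∂ρ) -
        (∫ x, w x * Real.exp (x ^ 2 / (2 * n) + x * t) ∂ρ) /
          (∫ x, Real.exp (x ^ 2 / (2 * n) + x * t) ∂ρ)|
      ≤ (W * ((3 / 2) * L ^ 2 * Real.exp (3 * L ^ 2)) / Real.exp (-(L ^ 2))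
          + W * Real.exp ((3 / 2) * L ^ 2) * ((3 / 2) * L ^ 2 * Real.exp (3 * L ^ 2))
            / Real.exp (-(L ^ 2)) ^ 2) / n := by
  have hW0 : (0 : ℝ) ≤ W := zero_le_one.trans hW1
  have hnR : (0 : ℝ) < (n : ℝ) := by exact_mod_cast Nat.pos_of_ne_zero (by omega)
  have hn1 : (1 : ℝ) ≤ (n : ℝ) := by exact_mod_cast hn
  -- pointwise estimates
  have hpt : ∀ x ∈ Set.Icc (-L) L,
      Real.exp (-(L ^ 2)) ≤ Real.exp (x * s) ∧
      Real.exp (x * s) ≤ Real.exp ((3 / 2) * L ^ 2) ∧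
      Real.exp (-(L ^ 2)) ≤ Real.exp (x ^ 2 / (2 * n) + x * t) ∧
      Real.exp (x ^ 2 / (2 * n) + x * t) ≤ Real.exp ((3 / 2) * L ^ 2) ∧
      |Real.exp (x * s) - Real.exp (x ^ 2 / (2 * n) + x * t)|
        ≤ ((3 / 2) * L ^ 2 * Real.exp (3 * L ^ 2)) / n := by
    intro x hx
    obtain ⟨hx1, hx2⟩ := hx
    have habs : |x| ≤ L := abs_le.2 ⟨hx1, hx2⟩
    have hxsq : x ^ 2 ≤ L ^ 2 := sq_le_sq' hx1 hx2
    have hxs : |x * s| ≤ L ^ 2 := by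
      rw [abs_mul]
      calc |x| * |s| ≤ L * L := mul_le_mul habs hs (abs_nonneg _) hL0.le
        _ = L ^ 2 := by ring
    have hxt : |x * t| ≤ L ^ 2 := by
      rw [abs_mul]
      calc |x| * |t| ≤ L * L := mul_le_mul habs ht (abs_nonneg _) hL0.le
        _ = L ^ 2 := by ring
    have hq0 : 0 ≤ x ^ 2 / (2 * n) := by positivity
    have hq : x ^ 2 / (2 * n) ≤ L ^ 2 / 2 := by
      apply div_le_div₀ (by positivity) hxsq (by norm_num)
      linarith
    have hu_lb : -(L ^ 2) ≤ x * s := (abs_le.1 hxs).1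
    have hu_ub : x * s ≤ (3 / 2) * L ^ 2 := by
      have := (abs_le.1 hxs).2; nlinarith [sq_nonneg L]
    have hv_lb : -(L ^ 2) ≤ x ^ 2 / (2 * n) + x * t := by
      have := (abs_le.1 hxt).1; linarith
    have hv_ub : x ^ 2 / (2 * n) + x * t ≤ (3 / 2) * L ^ 2 := by
      have := (abs_le.1 hxt).2; linarith
    refine ⟨Real.exp_le_exp.2 hu_lb, Real.exp_le_exp.2 hu_ub, Real.exp_le_exp.2 hv_lb,
      Real.exp_le_exp.2 hv_ub, ?_⟩
    have hdv : |x * s - (x ^ 2 / (2 * n) + x * t)| ≤ ((3 / 2) * L ^ 2) / n := by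
      have h1 : x * s - (x ^ 2 / (2 * n) + x * t) = x * (s - t) + -(x ^ 2 / (2 * n)) := by ring
      rw [h1]
      have h3 : |x * (s - t)| ≤ L * (L / n) := by
        rw [abs_mul]; exact mul_le_mul habs hst (abs_nonneg _) hL0.le
      have h4 : |-(x ^ 2 / (2 * n))| ≤ L ^ 2 / (2 * n) := by
        rw [abs_neg, abs_of_nonneg hq0]; gcongr
      have h5 : L * (L / n) + L ^ 2 / (2 * n) = ((3 / 2) * L ^ 2) / n := by
        field_simp; ring
      calc |x * (s - t) + -(x ^ 2 / (2 * n))| ≤ |x * (s - t)| + |-(x ^ 2 / (2 * n))| :=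
            abs_add_le _ _
        _ ≤ ((3 / 2) * L ^ 2) / n := by linarith
    have hdvs : |x * s - (x ^ 2 / (2 * n) + x * t)| ≤ (3 / 2) * L ^ 2 :=
      hdv.trans (div_le_self (by positivity) hn1)
    have hfact : Real.exp (x * s) - Real.exp (x ^ 2 / (2 * n) + x * t) =
        Real.exp (x ^ 2 / (2 * n) + x * t) *
          (Real.exp (x * s - (x ^ 2 / (2 * n) + x * t)) - 1) := by
      rw [mul_sub, mul_one, ← Real.exp_add]
      congr 2
      ring
    calc |Real.exp (x * s) - Real.exp (x ^ 2 / (2 * n) + x * t)|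
        = Real.exp (x ^ 2 / (2 * n) + x * t) *
            |Real.exp (x * s - (x ^ 2 / (2 * n) + x * t)) - 1| := by
          rw [hfact, abs_mul, abs_of_pos (Real.exp_pos _)]
      _ ≤ Real.exp ((3 / 2) * L ^ 2) *
            (|x * s - (x ^ 2 / (2 * n) + x * t)| *
              Real.exp |x * s - (x ^ 2 / (2 * n) + x * t)|) :=
          mul_le_mul (Real.exp_le_exp.2 hv_ub) (exp_sub_one_abs_le _) (abs_nonneg _)
            (Real.exp_pos _).le
      _ ≤ Real.exp ((3 / 2) * L ^ 2) *
            ((((3 / 2) * L ^ 2) / n) * Real.exp ((3 / 2) * L ^ 2)) := by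
          refine mul_le_mul_of_nonneg_left ?_ (Real.exp_pos _).le
          exact mul_le_mul hdv (Real.exp_le_exp.2 hdvs) (Real.exp_pos _).le (by positivity)
      _ = ((3 / 2) * L ^ 2 * Real.exp (3 * L ^ 2)) / n := by
          rw [show (3 : ℝ) * L ^ 2 = (3 / 2) * L ^ 2 + (3 / 2) * L ^ 2 by ring, Real.exp_add]
          field_simp
  -- integrability
  have hmA : Measurable (fun x : ℝ => Real.exp (x * s)) :=
    (measurable_id.mul_const s).exp
  have hmB : Measurable (fun x : ℝ => Real.exp (x ^ 2 / (2 * n) + x * t)) :=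
    (((measurable_id.pow_const 2).div_const _).add (measurable_id.mul_const t)).exp
  have hm1 : AEStronglyMeasurable (fun x => Real.exp (x * s)) ρ := hmA.aestronglyMeasurable
  have hm2 : AEStronglyMeasurable (fun x : ℝ => Real.exp (x ^ 2 / (2 * n) + x * t)) ρ :=
    hmB.aestronglyMeasurable
  have hm3 : AEStronglyMeasurable (fun x => w x * Real.exp (x * s)) ρ :=
    (hw.mul hmA).aestronglyMeasurable
  have hm4 : AEStronglyMeasurable (fun x : ℝ => w x * Real.exp (x ^ 2 / (2 * n) + x * t)) ρ :=
    (hw.mul hmB).aestronglyMeasurable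
  have hint1 : Integrable (fun x => Real.exp (x * s)) ρ :=
    integrable_of_ae_bound hm1 (hsupp.mono fun x hx => by
      rw [abs_of_pos (Real.exp_pos _)]; exact (hpt x hx).2.1)
  have hint2 : Integrable (fun x : ℝ => Real.exp (x ^ 2 / (2 * n) + x * t)) ρ :=
    integrable_of_ae_bound hm2 (hsupp.mono fun x hx => by
      rw [abs_of_pos (Real.exp_pos _)]; exact (hpt x hx).2.2.2.1)
  have hint3 : Integrable (fun x => w x * Real.exp (x * s)) ρ :=
    integrable_of_ae_bound hm3 (hsupp.mono fun x hx => by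
      rw [abs_mul, abs_of_pos (Real.exp_pos _)]
      exact mul_le_mul (hwb x hx) (hpt x hx).2.1 (Real.exp_pos _).le hW0)
  have hint4 : Integrable (fun x : ℝ => w x * Real.exp (x ^ 2 / (2 * n) + x * t)) ρ :=
    integrable_of_ae_bound hm4 (hsupp.mono fun x hx => by
      rw [abs_mul, abs_of_pos (Real.exp_pos _)]
      exact mul_le_mul (hwb x hx) (hpt x hx).2.2.2.1 (Real.exp_pos _).le hW0)
  -- integral bounds
  have hB : Real.exp (-(L ^ 2)) ≤ ∫ x, Real.exp (x * s) ∂ρ :=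
    le_integral_of_ae_bound hint1 (hsupp.mono fun x hx => (hpt x hx).1)
  have hB' : Real.exp (-(L ^ 2)) ≤ ∫ x, Real.exp (x ^ 2 / (2 * n) + x * t) ∂ρ :=
    le_integral_of_ae_bound hint2 (hsupp.mono fun x hx => (hpt x hx).2.2.1)
  have hA' : |∫ x, w x * Real.exp (x ^ 2 / (2 * n) + x * t) ∂ρ|
      ≤ W * Real.exp ((3 / 2) * L ^ 2) :=
    abs_integral_le_of_ae_bound (hsupp.mono fun x hx => by
      rw [abs_mul, abs_of_pos (Real.exp_pos _)]
      exact mul_le_mul (hwb x hx) (hpt x hx).2.2.2.1 (Real.exp_pos _).le hW0)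
  have hAA' : |(∫ x, w x * Real.exp (x * s) ∂ρ) -
      ∫ x, w x * Real.exp (x ^ 2 / (2 * n) + x * t) ∂ρ|
      ≤ W * ((3 / 2) * L ^ 2 * Real.exp (3 * L ^ 2)) / n := by
    rw [← integral_sub hint3 hint4, mul_div_assoc]
    refine abs_integral_le_of_ae_bound (hsupp.mono fun x hx => ?_)
    rw [← mul_sub, abs_mul]
    exact mul_le_mul (hwb x hx) (hpt x hx).2.2.2.2 (abs_nonneg _) hW0
  have hBB' : |(∫ x, Real.exp (x * s) ∂ρ) - ∫ x, Real.exp (x ^ 2 / (2 * n) + x * t) ∂ρ|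
      ≤ ((3 / 2) * L ^ 2 * Real.exp (3 * L ^ 2)) / n := by
    rw [← integral_sub hint1 hint2]
    exact abs_integral_le_of_ae_bound (hsupp.mono fun x hx => (hpt x hx).2.2.2.2)
  exact div_sub_div_abs_le (Real.exp_pos _) hnR hW0 (by positivity) (Real.exp_pos _).le
    hB hB' hA' hAA' hBB'

theorem stmt_17 (L : ℝ) (hL0 : 0 < L) :
    ∃ C : ℝ, 0 < C ∧
      ∀ (ρ : Measure ℝ) [IsProbabilityMeasure ρ], ρ (Set.Icc (-L) L) = 1 →
        ∀ n : ℕ, 1 ≤ n → ∀ i : Fin n,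
          ∀ᵐ x ∂cwMeasure ρ n,
            |psiInf ρ ((∑ j, x j) / n) - psiN ρ n ((∑ j ∈ Finset.univ.erase i, x j) / n)|
                ≤ C / n ∧
              |phiInf ρ ((∑ j, x j) / n) - phiN ρ n ((∑ j ∈ Finset.univ.erase i, x j) / n)|
                ≤ C / n := by
  refine ⟨max 1 (L ^ 2) * ((3 / 2) * L ^ 2 * Real.exp (3 * L ^ 2)) / Real.exp (-(L ^ 2))
      + max 1 (L ^ 2) * Real.exp ((3 / 2) * L ^ 2) * ((3 / 2) * L ^ 2 * Real.exp (3 * L ^ 2))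
        / Real.exp (-(L ^ 2)) ^ 2, ?_, ?_⟩
  · have hL2 : (0:ℝ) < L ^ 2 := by positivity
    have h1 : (0:ℝ) < max 1 (L ^ 2) := lt_max_of_lt_left one_pos
    positivity
  · intro ρ _ hρ n hn i
    have hρc : ρ (Set.Icc (-L) L)ᶜ = 0 := by
      rw [measure_compl measurableSet_Icc (measure_ne_top _ _), hρ, measure_univ]
      simp
    have hsupp : ∀ᵐ x ∂ρ, x ∈ Set.Icc (-L) L := by
      rw [ae_iff]
      simpa [Set.compl_def] using hρc
    have hae_pi : ∀ᵐ x ∂(Measure.pi fun _ : Fin n => ρ), ∀ j, x j ∈ Set.Icc (-L) L := by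
      rw [ae_all_iff]
      intro j
      rw [ae_iff]
      exact Measure.pi_eval_preimage_null (μ := fun _ : Fin n => ρ) hρc
    have hae : ∀ᵐ x ∂cwMeasure ρ n, ∀ j, x j ∈ Set.Icc (-L) L :=
      (withDensity_absolutelyContinuous _ _).ae_le hae_pi
    have hnR : (0 : ℝ) < (n : ℝ) := by exact_mod_cast Nat.pos_of_ne_zero (by omega)
    filter_upwards [hae] with x hx
    have habs : ∀ j, |x j| ≤ L := fun j => abs_le.2 ⟨(hx j).1, (hx j).2⟩
    have hS : |∑ j, x j| ≤ n * L := by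
      calc |∑ j, x j| ≤ ∑ j, |x j| := Finset.abs_sum_le_sum_abs _ _
        _ ≤ ∑ _j : Fin n, L := Finset.sum_le_sum fun j _ => habs j
        _ = n * L := by simp [Finset.sum_const, Finset.card_univ, mul_comm]
    have hS' : |∑ j ∈ Finset.univ.erase i, x j| ≤ n * L := by
      calc |∑ j ∈ Finset.univ.erase i, x j| ≤ ∑ j ∈ Finset.univ.erase i, |x j| :=
            Finset.abs_sum_le_sum_abs _ _
        _ ≤ ∑ j, |x j| :=
            Finset.sum_le_sum_of_subset_of_nonneg (Finset.erase_subset _ _)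
              (fun j _ _ => abs_nonneg _)
        _ ≤ ∑ _j : Fin n, L := Finset.sum_le_sum fun j _ => habs j
        _ = n * L := by simp [Finset.sum_const, Finset.card_univ, mul_comm]
    have hm : |(∑ j, x j) / n| ≤ L := by
      rw [abs_div, abs_of_pos hnR, div_le_iff₀ hnR]
      linarith
    have hmi : |(∑ j ∈ Finset.univ.erase i, x j) / n| ≤ L := by
      rw [abs_div, abs_of_pos hnR, div_le_iff₀ hnR]
      linarith
    have hdiff : |(∑ j, x j) / n - (∑ j ∈ Finset.univ.erase i, x j) / n| ≤ L / n := by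
      have hsum : (∑ j, x j) - ∑ j ∈ Finset.univ.erase i, x j = x i := by
        rw [← Finset.sum_erase_add Finset.univ x (Finset.mem_univ i)]
        ring
      rw [div_sub_div_same, hsum, abs_div, abs_of_pos hnR]
      gcongr
      exact habs i
    have hLmax : L ≤ max 1 (L ^ 2) := by
      rcases le_total L 1 with h | h
      · exact h.trans (le_max_left _ _)
      · exact (by nlinarith : L ≤ L ^ 2).trans (le_max_right _ _)
    have hwb1 : ∀ y ∈ Set.Icc (-L) L, |(fun z : ℝ => z) y| ≤ max 1 (L ^ 2) := fun y hy =>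
      (abs_le.2 ⟨hy.1, hy.2⟩).trans hLmax
    have hwb2 : ∀ y ∈ Set.Icc (-L) L, |(fun z : ℝ => z ^ 2) y| ≤ max 1 (L ^ 2) := fun y hy => by
      rw [abs_of_nonneg (sq_nonneg _)]
      exact (sq_le_sq' hy.1 hy.2).trans (le_max_right _ _)
    constructor
    · exact ratio_bound L hL0 ρ hsupp (fun z => z) measurable_id (max 1 (L ^ 2))
        (le_max_left _ _) hwb1 n hn _ _ hm hmi hdiff
    · exact ratio_bound L hL0 ρ hsupp (fun z => z ^ 2) (measurable_id.pow_const 2)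
        (max 1 (L ^ 2)) (le_max_left _ _) hwb2 n hn _ _ hm hmi hdiff
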